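/- Suppose a > 0, d > 0, 0 ≤ b < 1, x(k+1) − x(k) ≥ x(k+1)·(b − a·x(k − τ(k))) + d for all integers k ≥ k₀, and there is a constant N > 0 with limsup_{k→+∞} x(k) ≤ N. Then liminf_{k→+∞} x(k) ≥ (b/a)·e^{−a·N·τ̄}. (Discrete case, 𝕋 = ℤ, of Lemma 2.14(ii).) -/

import Mathlib

open Filter

lemma aux_delay (a b d M : ℝ) (k₀ K : ℤ) (τbar : ℕ) (τ : ℤ → ℕ) (x : ℤ → ℝ)
    (ha : 0 < a) (hd : 0 < d) (hb0 : 0 ≤ b) (hb1 : b < 1)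
    (hτ : ∀ k : ℤ, τ k ≤ τbar)
    (hxpos : ∀ k : ℤ, k₀ - (τbar : ℤ) ≤ k → 0 < x k)
    (hineq : ∀ k : ℤ, k₀ ≤ k →
      x (k + 1) - x k ≥ x (k + 1) * (b - a * x (k - (τ k : ℤ))) + d)
    (hM : ∀ j : ℤ, K ≤ j → x j < M) :
    ∀ᶠ j in atTop, b / a * Real.exp (-(a * M * τbar)) ≤ x j := by
  set L : ℝ := b / a * Real.exp (-(a * M * τbar)) with hL
  set K₁ : ℤ := max (K + τbar) k₀ with hK₁
  have hK₁K : K + τbar ≤ K₁ := le_max_left _ _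
  have hK₁k₀ : k₀ ≤ K₁ := le_max_right _ _
  -- Step A: one-step decay bound
  have stepA : ∀ j : ℤ, K₁ ≤ j → x j * Real.exp (-(a * M)) ≤ x (j + 1) := by
    intro j hj
    have hτj := hτ j
    have h := hineq j (le_trans hK₁k₀ hj)
    have hx' : 0 < x (j - (τ j : ℤ)) := hxpos _ (by omega)
    have hx'M : x (j - (τ j : ℤ)) < M := hM _ (by omega)
    have hxj : 0 < x j := hxpos _ (by omega)
    have hxj1 : 0 < x (j + 1) := hxpos _ (by omega)
    have hkey : x j ≤ x (j + 1) * (1 - b + a * x (j - (τ j : ℤ))) := by nlinarith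
    have hce : 1 - b + a * x (j - (τ j : ℤ)) ≤ Real.exp (a * M) := by
      have h1 : a * M + 1 ≤ Real.exp (a * M) := Real.add_one_le_exp _
      nlinarith
    have h2 : x j ≤ x (j + 1) * Real.exp (a * M) := by nlinarith
    rw [Real.exp_neg]
    rw [mul_inv_le_iff₀ (Real.exp_pos _)]
    linarith [h2]
  -- Step B: multi-step decay bound
  have stepB : ∀ (n : ℕ) (j : ℤ), K₁ ≤ j →
      x j * Real.exp (-(a * M * n)) ≤ x (j + (n : ℤ)) := by
    intro n
    induction n with
    | zero => intro j hj; simp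
    | succ n ih =>
        intro j hj
        have h1 := ih j hj
        have h2 := stepA (j + (n : ℤ)) (by omega)
        have hxj : 0 < x j := hxpos _ (by omega)
        have hidx : j + ((n : ℤ) + 1) = (j + (n : ℤ)) + 1 := by ring
        have hexp : Real.exp (-(a * M * ((n : ℝ) + 1)))
            = Real.exp (-(a * M * n)) * Real.exp (-(a * M)) := by
          rw [← Real.exp_add]; ring_nf
        push_cast
        rw [hidx, hexp]
        calc x j * (Real.exp (-(a * M * n)) * Real.exp (-(a * M)))
            = (x j * Real.exp (-(a * M * n))) * Real.exp (-(a * M)) := by ring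
          _ ≤ x (j + (n : ℤ)) * Real.exp (-(a * M)) := by
              exact mul_le_mul_of_nonneg_right h1 (Real.exp_pos _).le
          _ ≤ x ((j + (n : ℤ)) + 1) := h2
  -- Step C: bound at local bottoms
  have stepC : ∀ k : ℤ, K₁ + τbar ≤ k → x (k + 1) ≤ x k → L ≤ x (k + 1) := by
    intro k hk hdec
    have hτk := hτ k
    have hB := stepB (τ k) (k - (τ k : ℤ)) (by omega)
    have hidx : k - (τ k : ℤ) + (τ k : ℤ) = k := by ring
    rw [hidx] at hB
    have hx' : 0 < x (k - (τ k : ℤ)) := hxpos _ (by omega)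
    have hxk : 0 < x k := hxpos _ (by omega)
    have hxk1 : 0 < x (k + 1) := hxpos _ (by omega)
    have h := hineq k (by omega)
    have hkey : b * x k ≤ a * x (k + 1) * x (k - (τ k : ℤ)) := by nlinarith
    have h3 : b * Real.exp (-(a * M * τ k)) ≤ a * x (k + 1) := by
      have h4 : b * Real.exp (-(a * M * τ k)) * x (k - (τ k : ℤ))
          ≤ a * x (k + 1) * x (k - (τ k : ℤ)) := by
        calc b * Real.exp (-(a * M * τ k)) * x (k - (τ k : ℤ))
            = b * (x (k - (τ k : ℤ)) * Real.exp (-(a * M * τ k))) := by ring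
          _ ≤ b * x k := mul_le_mul_of_nonneg_left hB hb0
          _ ≤ a * x (k + 1) * x (k - (τ k : ℤ)) := hkey
      exact le_of_mul_le_mul_right h4 hx'
    have hexp : Real.exp (-(a * M * τbar)) ≤ Real.exp (-(a * M * τ k)) := by
      apply Real.exp_le_exp.mpr
      have hc : (τ k : ℝ) ≤ (τbar : ℝ) := by exact_mod_cast hτk
      have hM0 : 0 < M := lt_trans (hxpos k (by omega)) (hM k (by omega))
      have := mul_le_mul_of_nonneg_left hc (le_of_lt (mul_pos ha hM0))
      linarith
    rw [hL, div_mul_eq_mul_div, div_le_iff₀ ha]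
    calc b * Real.exp (-(a * M * τbar)) ≤ b * Real.exp (-(a * M * τ k)) :=
          mul_le_mul_of_nonneg_left hexp hb0
      _ ≤ a * x (k + 1) := h3
      _ = x (k + 1) * a := by ring
  -- Step D: escape from below L
  have stepD : ∃ k' : ℤ, K₁ + τbar ≤ k' ∧ L ≤ x k' := by
    by_contra hcon
    push_neg at hcon
    have haL : a * L ≤ b := by
      have hM0 : 0 < M := lt_trans (hxpos K₁ (by omega)) (hM K₁ (by omega))
      have he : Real.exp (-(a * M * τbar)) ≤ 1 := by
        rw [Real.exp_le_one_iff]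
        have h0 : (0:ℝ) ≤ a * M * τbar := by positivity
        linarith
      have heq : a * L = b * Real.exp (-(a * M * τbar)) := by
        rw [hL]; field_simp
      nlinarith [Real.exp_pos (-(a * M * (τbar:ℝ)))]
    set K₃ : ℤ := K₁ + τbar + τbar with hK₃
    have incr : ∀ k : ℤ, K₃ ≤ k → x k + d ≤ x (k + 1) := by
      intro k hk
      have hτk := hτ k
      have hx' := hcon (k - (τ k : ℤ)) (by omega)
      have hx'pos : 0 < x (k - (τ k : ℤ)) := hxpos _ (by omega)
      have hxk1 : 0 < x (k + 1) := hxpos _ (by omega)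
      have h := hineq k (by omega)
      have h1 : a * x (k - (τ k : ℤ)) < a * L := by nlinarith
      have h2 : 0 ≤ x (k + 1) * (b - a * x (k - (τ k : ℤ))) :=
        mul_nonneg hxk1.le (by linarith)
      linarith
    have grow : ∀ n : ℕ, x K₃ + n * d ≤ x (K₃ + (n : ℤ)) := by
      intro n
      induction n with
      | zero => simp
      | succ n ih =>
          have h2 := incr (K₃ + (n : ℤ)) (by omega)
          have hidx : K₃ + ((n : ℤ) + 1) = (K₃ + (n : ℤ)) + 1 := by ring
          push_cast
          rw [hidx]
          calc x K₃ + ((n : ℝ) + 1) * d = (x K₃ + n * d) + d := by ring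
            _ ≤ x (K₃ + (n : ℤ)) + d := by linarith
            _ ≤ x ((K₃ + (n : ℤ)) + 1) := h2
    obtain ⟨n, hn⟩ := exists_nat_ge ((M - x K₃) / d)
    have hn2 : M - x K₃ ≤ n * d := by
      rw [div_le_iff₀ hd] at hn
      linarith
    have h5 := grow n
    have h6 := hM (K₃ + (n : ℤ)) (by omega)
    linarith
  -- Step E: persistence
  obtain ⟨k', hk'1, hk'2⟩ := stepD
  rw [eventually_atTop]
  refine ⟨k', ?_⟩
  intro j hj
  refine Int.le_induction (motive := fun j _ => L ≤ x j) hk'2 ?_ j hj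
  intro n hn ih
  by_cases hc : x (n + 1) ≤ x n
  · exact stepC n (by omega) hc
  · linarith

/-- Discrete case (𝕋 = ℤ) of Lemma 2.14(ii): if
`x(k+1) − x(k) ≥ x(k+1)(b − a x(k − τ(k))) + d` for `k ≥ k₀` and
`limsup_{k→∞} x(k) ≤ N`, then `liminf_{k→∞} x(k) ≥ (b/a) e^{−a N τ̄}`. -/
theorem liminf_ge_of_delay_ineq_implicit_discrete
    (a b d N : ℝ) (k₀ : ℤ) (τbar : ℕ) (τ : ℤ → ℕ) (x : ℤ → ℝ)
    (ha : 0 < a) (hd : 0 < d) (hb0 : 0 ≤ b) (hb1 : b < 1)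
    (hτ : ∀ k : ℤ, τ k ≤ τbar)
    (hxpos : ∀ k : ℤ, k₀ - (τbar : ℤ) ≤ k → 0 < x k)
    (hineq : ∀ k : ℤ, k₀ ≤ k →
      x (k + 1) - x k ≥ x (k + 1) * (b - a * x (k - (τ k : ℤ))) + d)
    (hN : 0 < N)
    (hbound : Filter.limsup (fun k : ℤ => ((x k : EReal))) Filter.atTop ≤ ((N : ℝ) : EReal)) :
    ((b / a * Real.exp (-(a * N * (τbar : ℝ))) : ℝ) : EReal) ≤
      Filter.liminf (fun k : ℤ => ((x k : EReal))) Filter.atTop := by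

  set z := Filter.liminf (fun k : ℤ => ((x k : EReal))) Filter.atTop with hz
  have key : ∀ ε : ℝ, 0 < ε →
      ((b / a * Real.exp (-(a * (N + ε) * (τbar : ℝ))) : ℝ) : EReal) ≤ z := by
    intro ε hε
    have hlt : Filter.limsup (fun k : ℤ => ((x k : EReal))) Filter.atTop
        < ((N + ε : ℝ) : EReal) := by
      refine lt_of_le_of_lt hbound ?_
      exact_mod_cast (by linarith : N < N + ε)
    have hev : ∀ᶠ k in atTop, ((x k : EReal)) < ((N + ε : ℝ) : EReal) :=
      Filter.eventually_lt_of_limsup_lt hlt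
    have hev' : ∀ᶠ k in atTop, x k < N + ε := hev.mono fun k hk => by exact_mod_cast hk
    obtain ⟨K, hK⟩ := eventually_atTop.mp hev'
    have hmain := aux_delay a b d (N + ε) k₀ K τbar τ x ha hd hb0 hb1 hτ hxpos hineq hK
    refine le_liminf_of_le (by isBoundedDefault) ?_
    exact hmain.mono fun j hj => by exact_mod_cast hj
  have htend : Filter.Tendsto
      (fun ε : ℝ => ((b / a * Real.exp (-(a * (N + ε) * (τbar : ℝ))) : ℝ) : EReal))
      (nhdsWithin 0 (Set.Ioi 0))
      (nhds ((b / a * Real.exp (-(a * N * (τbar : ℝ))) : ℝ) : EReal)) := by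
    have hc : Filter.Tendsto
        (fun ε : ℝ => (b / a * Real.exp (-(a * (N + ε) * (τbar : ℝ))) : ℝ))
        (nhds 0) (nhds (b / a * Real.exp (-(a * N * (τbar : ℝ))))) := by
      have hcont : Continuous
          (fun ε : ℝ => (b / a * Real.exp (-(a * (N + ε) * (τbar : ℝ))) : ℝ)) := by
        continuity
      have := hcont.tendsto 0
      simpa using this
    exact ((continuous_coe_real_ereal.tendsto _).comp hc).mono_left nhdsWithin_le_nhds
  refine le_of_tendsto htend ?_
  exact Filter.eventually_of_mem self_mem_nhdsWithin fun ε hε => key ε hε
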